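/- Let m, n be positive integers with m ≥ 2 or n ≥ 2, let λ_{ij} > 0 for 1 ≤ i ≤ m, 1 ≤ j ≤ n, α_i = ∑_{j=1}^n λ_{ij}, β_j = ∑_{i=1}^m λ_{ij}, and take ρ = 2. Then the image of (0, ∞) under the logarithmic derivative (ln f)', where f(t) = [∏_{i=1}^m Γ(1+α_i t) · ∏_{j=1}^n Γ(1+β_j t)] / [∏_{i=1}^m ∏_{j=1}^n Γ(1+λ_{ij} t)]², is exactly the open interval (0, ln( [∏_{i=1}^m α_i^{α_i} · ∏_{j=1}^n β_j^{β_j}] / [∏_{i=1}^m ∏_{j=1}^n λ_{ij}^{λ_{ij}}]² )). -/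

import Mathlib

open Finset Filter Topology

/-- `n`-th approximant to the digamma function: `log n - ∑_{k=0}^{n} 1/(x+k)`. -/
noncomputable def dg (n : ℕ) (x : ℝ) : ℝ :=
  Real.log n - ∑ k ∈ Finset.range (n + 1), (x + k)⁻¹

/-- Summand for the series representation. -/
noncomputable def eterm (k : ℕ) (x : ℝ) : ℝ :=
  (Real.log (k + 2) - Real.log (k + 1)) - (x + (k + 1))⁻¹

/-- The digamma function (of its limit formula form). -/
noncomputable def psi (x : ℝ) : ℝ := (∑' k : ℕ, eterm k x) - x⁻¹

lemma summable_aux : Summable (fun k : ℕ => (1:ℝ)/((k:ℝ)+1)^2) := by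
  have h := Real.summable_one_div_nat_pow (p := 2) |>.mpr (by norm_num)
  have h2 := (summable_nat_add_iff 1).mpr h
  convert h2 using 2 with k
  case e'_3 => rfl
  push_cast; ring

lemma log_succ_div_bounds {u : ℝ} (hu : 0 < u) :
    u / (1 + u) ≤ Real.log (1 + u) ∧ Real.log (1 + u) ≤ u := by
  constructor
  · have h := Real.log_le_sub_one_of_pos (x := (1+u)⁻¹) (by positivity)
    rw [Real.log_inv] at h
    have : (1+u)⁻¹ - 1 = -(u/(1+u)) := by field_simp; ring
    rw [this] at h
    linarith
  · have h := Real.log_le_sub_one_of_pos (x := 1+u) (by positivity)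
    linarith

lemma log_diff_le {a : ℝ} (ha : 0 < a) : Real.log (a+1) - Real.log a ≤ a⁻¹ := by
  rw [← Real.log_div (by positivity) (by positivity)]
  have : (a+1)/a = 1 + a⁻¹ := by field_simp
  rw [this]
  have := (log_succ_div_bounds (u := a⁻¹) (by positivity)).2
  linarith

lemma le_log_diff {a : ℝ} (ha : 0 < a) : (a+1)⁻¹ ≤ Real.log (a+1) - Real.log a := by
  rw [← Real.log_div (by positivity) (by positivity)]
  have h1 : (a+1)/a = 1 + a⁻¹ := by field_simp
  rw [h1]
  have := (log_succ_div_bounds (u := a⁻¹) (by positivity)).1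
  have h2 : a⁻¹ / (1 + a⁻¹) = (a+1)⁻¹ := by
    rw [div_eq_iff (by positivity)]
    field_simp
  rw [h2] at this
  exact this

lemma eterm_bound {R : ℝ} (hR : 1 ≤ R) (k : ℕ) {x : ℝ} (hx : x ∈ Set.Ioo (0:ℝ) R) :
    ‖eterm k x‖ ≤ (R + 1) * ((1:ℝ)/((k:ℝ)+1)^2) := by
  obtain ⟨hx0, hxR⟩ := hx
  have hk1 : (0:ℝ) < (k:ℝ) + 1 := by positivity
  have hk2 : (0:ℝ) < (k:ℝ) + 2 := by positivity
  have hlog : Real.log (k+2) - Real.log (k+1) ∈ Set.Icc ((k:ℝ)+2)⁻¹ ((k:ℝ)+1)⁻¹ := by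
    have h1 := le_log_diff (a := (k:ℝ)+1) hk1
    have h2 := log_diff_le (a := (k:ℝ)+1) hk1
    have e : ((k:ℝ)+1) + 1 = (k:ℝ)+2 := by ring
    rw [e] at h1 h2
    exact ⟨h1, h2⟩
  have hxk : ((k:ℝ)+2)⁻¹ - (x + (k+1))⁻¹ ≤ eterm k x := by
    unfold eterm; have := hlog.1; linarith
  have hxk2 : eterm k x ≤ ((k:ℝ)+1)⁻¹ - (x + (k+1))⁻¹ := by
    unfold eterm; have := hlog.2; linarith
  have hden : (0:ℝ) < x + (k+1) := by positivity
  have hub : eterm k x ≤ R * (1/((k:ℝ)+1)^2) := by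
    have h1 : ((k:ℝ)+1)⁻¹ - (x + (k+1))⁻¹ = x / (((k:ℝ)+1) * (x + (k+1))) := by
      rw [eq_div_iff (by positivity)]
      field_simp
      ring
    have h2 : x / (((k:ℝ)+1) * (x + (k+1))) ≤ R / (((k:ℝ)+1) * ((k:ℝ)+1)) := by
      apply div_le_div₀ (by positivity) (le_of_lt hxR) (by positivity)
      have : (k:ℝ)+1 ≤ x + (k+1) := by linarith
      nlinarith
    calc eterm k x ≤ ((k:ℝ)+1)⁻¹ - (x + (k+1))⁻¹ := hxk2
      _ = x / (((k:ℝ)+1) * (x + (k+1))) := h1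
      _ ≤ R / (((k:ℝ)+1) * ((k:ℝ)+1)) := h2
      _ = R * (1/((k:ℝ)+1)^2) := by ring
  have hlb : -(1 * (1/((k:ℝ)+1)^2)) ≤ eterm k x := by
    have h1 : ((k:ℝ)+2)⁻¹ - (x + (k+1))⁻¹ ≥ ((k:ℝ)+2)⁻¹ - ((k:ℝ)+1)⁻¹ := by
      have : (x + (k+1))⁻¹ ≤ ((k:ℝ)+1)⁻¹ := by
        apply inv_anti₀ hk1; linarith
      linarith
    have h2 : ((k:ℝ)+2)⁻¹ - ((k:ℝ)+1)⁻¹ = -(1/(((k:ℝ)+1)*((k:ℝ)+2))) := by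
      field_simp; ring
    have h3 : (1:ℝ)/(((k:ℝ)+1)*((k:ℝ)+2)) ≤ 1/((k:ℝ)+1)^2 := by
      apply div_le_div_of_nonneg_left (by norm_num) (by positivity)
      nlinarith
    have := hxk
    nlinarith
  rw [Real.norm_eq_abs, abs_le]
  constructor
  · have : -((R+1) * (1/((k:ℝ)+1)^2)) ≤ -(1 * (1/((k:ℝ)+1)^2)) := by
      have : (0:ℝ) ≤ 1/((k:ℝ)+1)^2 := by positivity
      nlinarith
    linarith
  · have : R * (1/((k:ℝ)+1)^2) ≤ (R+1) * (1/((k:ℝ)+1)^2) := by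
      have : (0:ℝ) ≤ 1/((k:ℝ)+1)^2 := by positivity
      nlinarith
    linarith
lemma dg_eq (n : ℕ) (x : ℝ) :
    dg n x = (∑ k ∈ Finset.range n, eterm k x) - x⁻¹
      - (Real.log (n+1) - Real.log n) := by
  have htel : ∑ k ∈ Finset.range n, (Real.log ((k:ℝ)+2) - Real.log ((k:ℝ)+1))
      = Real.log ((n:ℝ)+1) - Real.log 1 := by
    have h := Finset.sum_range_sub (fun i : ℕ => Real.log ((i:ℝ)+1)) n
    push_cast at h
    norm_num at h
    rw [Real.log_one, sub_zero, ← h, Finset.sum_sub_distrib]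
    congr 1
    apply Finset.sum_congr rfl
    intro k _
    congr 1
    ring
  have hsum : ∑ k ∈ Finset.range (n+1), (x + (k:ℝ))⁻¹
      = (∑ k ∈ Finset.range n, (x + ((k:ℝ)+1))⁻¹) + x⁻¹ := by
    have := Finset.sum_range_succ' (fun k : ℕ => (x + (k:ℝ))⁻¹) n
    rw [this]
    push_cast
    simp
  have hsplit : ∑ k ∈ Finset.range n, eterm k x
      = (Real.log ((n:ℝ)+1) - Real.log 1) - ∑ k ∈ Finset.range n, (x + ((k:ℝ)+1))⁻¹ := by
    unfold eterm
    rw [Finset.sum_sub_distrib, htel]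
  unfold dg
  rw [hsum, hsplit, Real.log_one]
  push_cast
  ring

lemma log_succ_sub_tendsto :
    Filter.Tendsto (fun n : ℕ => Real.log ((n:ℝ)+1) - Real.log n) Filter.atTop (𝓝 0) := by
  have h1 : Filter.Tendsto (fun n : ℕ => (1:ℝ) + (n:ℝ)⁻¹) Filter.atTop (𝓝 1) := by
    have := tendsto_inv_atTop_zero.comp (tendsto_natCast_atTop_atTop (R := ℝ))
    simpa using (tendsto_const_nhds (x := (1:ℝ))).add this
  have h2 : Filter.Tendsto (fun n : ℕ => Real.log (1 + (n:ℝ)⁻¹)) Filter.atTop (𝓝 0) := by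
    have hc : ContinuousAt Real.log 1 := Real.continuousAt_log one_ne_zero
    have := hc.tendsto.comp h1
    simpa [Function.comp_def] using this
  apply h2.congr'
  filter_upwards [Filter.eventually_ge_atTop 1] with n hn
  have hn' : (0:ℝ) < n := by exact_mod_cast hn
  rw [← Real.log_div (by positivity) (ne_of_gt hn')]
  congr 1
  field_simp

lemma dg_tendstoUniformlyOn {R : ℝ} (hR : 1 ≤ R) :
    TendstoUniformlyOn dg psi Filter.atTop (Set.Ioo 0 R) := by
  have hsumm : Summable (fun k : ℕ => (R+1) * ((1:ℝ)/((k:ℝ)+1)^2)) :=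
    summable_aux.mul_left _
  have h1 := tendstoUniformlyOn_tsum_nat hsumm
    (fun k x hx => eterm_bound hR k hx)
  rw [Metric.tendstoUniformlyOn_iff] at h1 ⊢
  intro ε hε
  have h2 := (log_succ_sub_tendsto.eventually (Metric.ball_mem_nhds (0:ℝ) (half_pos hε)))
  filter_upwards [h1 (ε/2) (half_pos hε), h2] with n hn hlog x hx
  have hx' := hn x hx
  rw [Real.dist_eq] at hx' ⊢
  rw [Real.dist_eq, sub_zero] at hlog
  rw [dg_eq n x]
  unfold psi
  have : (∑' k, eterm k x) - x⁻¹ - ((∑ k ∈ Finset.range n, eterm k x) - x⁻¹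
      - (Real.log ((n:ℝ)+1) - Real.log n))
      = ((∑' k, eterm k x) - (∑ k ∈ Finset.range n, eterm k x))
        + (Real.log ((n:ℝ)+1) - Real.log n) := by ring
  rw [this]
  calc |(∑' k, eterm k x) - (∑ k ∈ Finset.range n, eterm k x)
        + (Real.log ((n:ℝ)+1) - Real.log n)|
      ≤ |(∑' k, eterm k x) - (∑ k ∈ Finset.range n, eterm k x)|
        + |Real.log ((n:ℝ)+1) - Real.log n| := abs_add_le _ _
    _ < ε/2 + ε/2 := by exact add_lt_add hx' hlog
    _ = ε := by ring

lemma dg_tendsto {x : ℝ} (hx : 0 < x) :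
    Filter.Tendsto (fun n => dg n x) Filter.atTop (𝓝 (psi x)) :=
  (dg_tendstoUniformlyOn (R := x+1) (by linarith)).tendsto_at ⟨hx, by linarith⟩

lemma gammaSeq_log_hasDeriv {n : ℕ} (hn : 1 ≤ n) {x : ℝ} (hx : 0 < x) :
    HasDerivAt (fun y => Real.log (Real.GammaSeq y n)) (dg n x) x := by
  have hn' : (0:ℝ) < n := by exact_mod_cast hn
  set F : ℝ → ℝ := fun y => y * Real.log n + Real.log (Nat.factorial n : ℝ)
    - ∑ k ∈ Finset.range (n+1), Real.log (y + k) with hF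
  have hder : HasDerivAt F (dg n x) x := by
    have h1 : HasDerivAt (fun y : ℝ => y * Real.log n) (Real.log n) x :=
      hasDerivAt_mul_const _
    have h2 : HasDerivAt (fun y : ℝ => ∑ k ∈ Finset.range (n+1), Real.log (y + k))
        (∑ k ∈ Finset.range (n+1), (x + (k:ℝ))⁻¹) x := by
      apply HasDerivAt.fun_sum
      intro k _
      have hpos : (0:ℝ) < x + k := by positivity
      have := (Real.hasDerivAt_log (ne_of_gt hpos)).comp x
        ((hasDerivAt_id x).add_const (k:ℝ))
      simpa [Function.comp_def] using this
    have := (h1.add_const (Real.log (Nat.factorial n : ℝ))).sub h2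
    exact this.congr_deriv (by unfold dg; ring)
  have heq : ∀ y ∈ Set.Ioi (0:ℝ), Real.log (Real.GammaSeq y n) = F y := by
    intro y hy
    have hy' : (0:ℝ) < y := hy
    have hprod : (0:ℝ) < ∏ k ∈ Finset.range (n+1), (y + (k:ℝ)) := by
      apply Finset.prod_pos
      intro k _
      positivity
    have hpow : (0:ℝ) < (n:ℝ) ^ y := Real.rpow_pos_of_pos hn' y
    have hfac : (0:ℝ) < (Nat.factorial n : ℝ) := by exact_mod_cast Nat.factorial_pos n
    unfold Real.GammaSeq
    rw [Real.log_div (by positivity) (ne_of_gt hprod), Real.log_mul (ne_of_gt hpow)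
      (ne_of_gt hfac), Real.log_rpow hn', Real.log_prod
      (fun k _ => by positivity)]
  exact hder.congr_of_eventuallyEq (Filter.eventuallyEq_of_mem (Ioi_mem_nhds hx) heq)

theorem psi_hasDerivAt {x : ℝ} (hx : 0 < x) :
    HasDerivAt (fun y => Real.log (Real.Gamma y)) (psi x) x := by
  have hsub : x ∈ Set.Ioo (0:ℝ) (x+1) := ⟨hx, by linarith⟩
  apply hasDerivAt_of_tendstoLocallyUniformlyOn (l := Filter.atTop) (s := Set.Ioo (0:ℝ) (x+1)) isOpen_Ioo
    (f := fun n (y:ℝ) => Real.log (Real.GammaSeq y (n+1)))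
    (f' := fun n (y:ℝ) => dg (n+1) y) (g' := psi) _ _ _ hsub
  · apply TendstoUniformlyOn.tendstoLocallyUniformlyOn
    have h := dg_tendstoUniformlyOn (R := x+1) (by linarith)
    rw [Metric.tendstoUniformlyOn_iff] at h ⊢
    intro ε hε
    exact (tendsto_add_atTop_nat 1).eventually (h ε hε)
  · filter_upwards with n y hy
    exact gammaSeq_log_hasDeriv (Nat.le_add_left 1 n) hy.1
  · intro y hy
    have hG : (0:ℝ) < Real.Gamma y := Real.Gamma_pos_of_pos hy.1
    exact ((Real.continuousAt_log (ne_of_gt hG)).tendsto.comp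
      ((Real.GammaSeq_tendsto_Gamma y).comp (tendsto_add_atTop_nat 1)))
lemma psi_sub_psi_le {x y C : ℝ} (hx : 0 < x) (hy : 0 < y)
    (h : ∀ n : ℕ, ∑ k ∈ Finset.range (n+1), ((y+(k:ℝ))⁻¹ - (x+(k:ℝ))⁻¹) ≤ C) :
    psi x - psi y ≤ C := by
  apply le_of_tendsto ((dg_tendsto hx).sub (dg_tendsto hy))
  filter_upwards with n
  have hd : dg n x - dg n y = ∑ k ∈ Finset.range (n+1), ((y+(k:ℝ))⁻¹ - (x+(k:ℝ))⁻¹) := by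
    unfold dg
    rw [Finset.sum_sub_distrib]
    ring
  rw [hd]
  exact h n

lemma sum_inv_sq_le (n : ℕ) :
    ∑ k ∈ Finset.range (n+1), (((k:ℝ)+1)⁻¹ * ((k:ℝ)+1)⁻¹) ≤ 2 := by
  have key : ∀ m : ℕ, ∑ k ∈ Finset.range (m+1), (((k:ℝ)+1)⁻¹ * ((k:ℝ)+1)⁻¹)
      ≤ 2 - ((m:ℝ)+1)⁻¹ := by
    intro m
    induction m with
    | zero => norm_num
    | succ p ih =>
      rw [Finset.sum_range_succ]
      push_cast
      have h1 : (0:ℝ) < (p:ℝ) + 1 := by positivity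
      have h2 : (0:ℝ) < (p:ℝ) + 2 := by positivity
      have h3 : ((p:ℝ)+1+1)⁻¹ * ((p:ℝ)+1+1)⁻¹ ≤ ((p:ℝ)+1)⁻¹ - ((p:ℝ)+2)⁻¹ := by
        have e : ((p:ℝ)+1)⁻¹ - ((p:ℝ)+2)⁻¹ = (((p:ℝ)+1) * ((p:ℝ)+2))⁻¹ := by
          rw [inv_sub_inv (ne_of_gt h1) (ne_of_gt h2)]
          norm_num
        rw [e]
        have : ((p:ℝ)+1+1) * ((p:ℝ)+1+1) ≥ ((p:ℝ)+1) * ((p:ℝ)+2) := by nlinarith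
        have hpos : (0:ℝ) < ((p:ℝ)+1) * ((p:ℝ)+2) := by positivity
        rw [← mul_inv]
        exact inv_anti₀ hpos this
      have e2 : (p:ℝ)+1+1 = (p:ℝ)+2 := by ring
      rw [e2] at h3 ⊢
      linarith
  calc ∑ k ∈ Finset.range (n+1), (((k:ℝ)+1)⁻¹ * ((k:ℝ)+1)⁻¹)
      ≤ 2 - ((n:ℝ)+1)⁻¹ := key n
    _ ≤ 2 := by
        have : (0:ℝ) < ((n:ℝ)+1)⁻¹ := by positivity
        linarith

lemma psi_le_log {x : ℝ} (hx : 0 < x) : psi x ≤ Real.log x := by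
  apply le_of_tendsto (dg_tendsto hx)
  filter_upwards with n
  have htel : ∑ k ∈ Finset.range (n+1), (Real.log (x+(k:ℝ)+1) - Real.log (x+(k:ℝ)))
      = Real.log (x+(n:ℝ)+1) - Real.log x := by
    have h := Finset.sum_range_sub (fun i : ℕ => Real.log (x+(i:ℝ))) (n+1)
    push_cast at h
    simp only [add_zero] at h
    rw [show Real.log (x+(n:ℝ)+1) = Real.log (x+((n:ℝ)+1)) by ring_nf, ← h]
    apply Finset.sum_congr rfl
    intro k _
    ring_nf
  have hterm : ∀ k ∈ Finset.range (n+1),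
      Real.log (x+(k:ℝ)+1) - Real.log (x+(k:ℝ)) ≤ (x+(k:ℝ))⁻¹ := by
    intro k _
    exact log_diff_le (a := x+(k:ℝ)) (by positivity)
  have hsum : Real.log (x+(n:ℝ)+1) - Real.log x ≤ ∑ k ∈ Finset.range (n+1), (x+(k:ℝ))⁻¹ := by
    rw [← htel]
    exact Finset.sum_le_sum hterm
  have hlog : Real.log n ≤ Real.log (x+(n:ℝ)+1) := by
    rcases Nat.eq_zero_or_pos n with h | h
    · subst h
      simp only [Nat.cast_zero, Real.log_zero]
      apply Real.log_nonneg
      linarith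
    · apply Real.log_le_log (by exact_mod_cast h)
      linarith
  unfold dg
  linarith

lemma log_sub_inv_le_psi {x : ℝ} (hx : 0 < x) : Real.log x - x⁻¹ ≤ psi x := by
  have haux : Filter.Tendsto
      (fun n : ℕ => Real.log x - x⁻¹ + (Real.log n - Real.log (x+(n:ℝ))))
      Filter.atTop (𝓝 (Real.log x - x⁻¹)) := by
    have h1 : Filter.Tendsto (fun n : ℕ => (1:ℝ) + x * (n:ℝ)⁻¹) Filter.atTop (𝓝 1) := by
      have := (tendsto_inv_atTop_zero.comp (tendsto_natCast_atTop_atTop (R := ℝ))).const_mul x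
      simpa using (tendsto_const_nhds (x := (1:ℝ))).add this
    have h2 : Filter.Tendsto (fun n : ℕ => Real.log (1 + x * (n:ℝ)⁻¹))
        Filter.atTop (𝓝 0) := by
      have hc : ContinuousAt Real.log 1 := Real.continuousAt_log one_ne_zero
      simpa [Function.comp_def] using hc.tendsto.comp h1
    have h3 : Filter.Tendsto (fun n : ℕ => Real.log (x+(n:ℝ)) - Real.log n)
        Filter.atTop (𝓝 0) := by
      apply h2.congr'
      filter_upwards [Filter.eventually_ge_atTop 1] with n hn
      have hn' : (0:ℝ) < n := by exact_mod_cast hn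
      rw [← Real.log_div (by positivity) (ne_of_gt hn')]
      congr 1
      field_simp
      ring
    have := (tendsto_const_nhds (x := Real.log x - x⁻¹)).sub h3
    simpa using this.congr (fun n => by ring)
  apply le_of_tendsto_of_tendsto' haux (dg_tendsto hx)
  intro n
  have htel : ∑ k ∈ Finset.range n, (Real.log (x+(k:ℝ)+1) - Real.log (x+(k:ℝ)))
      = Real.log (x+(n:ℝ)) - Real.log x := by
    have h := Finset.sum_range_sub (fun i : ℕ => Real.log (x+(i:ℝ))) n
    push_cast at h
    simp only [add_zero] at h
    rw [← h]
    apply Finset.sum_congr rfl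
    intro k _
    ring_nf
  have hsplit : ∑ k ∈ Finset.range (n+1), (x+(k:ℝ))⁻¹
      = (∑ k ∈ Finset.range n, (x+((k:ℝ)+1))⁻¹) + x⁻¹ := by
    have := Finset.sum_range_succ' (fun k : ℕ => (x + (k:ℝ))⁻¹) n
    rw [this]
    push_cast
    simp
  have hterm : ∀ k ∈ Finset.range n, (x+((k:ℝ)+1))⁻¹
      ≤ Real.log (x+(k:ℝ)+1) - Real.log (x+(k:ℝ)) := by
    intro k _
    have e : x+((k:ℝ)+1) = x+(k:ℝ)+1 := by ring
    rw [e]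
    exact le_log_diff (a := x+(k:ℝ)) (by positivity)
  have hsum : ∑ k ∈ Finset.range n, (x+((k:ℝ)+1))⁻¹ ≤ Real.log (x+(n:ℝ)) - Real.log x := by
    rw [← htel]
    exact Finset.sum_le_sum hterm
  unfold dg
  rw [hsplit]
  linarith
lemma psi_one_add_sub_psi_one {s : ℝ} (hs : 0 ≤ s) :
    0 ≤ psi (1+s) - psi 1 ∧ psi (1+s) - psi 1 ≤ 2*s := by
  constructor
  · have h := psi_sub_psi_le (x := 1) (y := 1+s) (C := 0) one_pos (by linarith) ?_
    · linarith
    · intro n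
      apply Finset.sum_nonpos
      intro k _
      have h1 : (0:ℝ) < 1 + (k:ℝ) := by positivity
      have h2 : 1 + (k:ℝ) ≤ 1 + s + (k:ℝ) := by linarith
      have := inv_anti₀ h1 h2
      linarith
  · apply psi_sub_psi_le (x := 1+s) (y := 1) (by linarith) one_pos
    intro n
    have hterm : ∀ k ∈ Finset.range (n+1),
        (1+(k:ℝ))⁻¹ - (1+s+(k:ℝ))⁻¹ ≤ s * (((k:ℝ)+1)⁻¹ * ((k:ℝ)+1)⁻¹) := by
      intro k _
      have h1 : (0:ℝ) < 1 + (k:ℝ) := by positivity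
      have h2 : (0:ℝ) < 1 + s + (k:ℝ) := by positivity
      have e : (1+(k:ℝ))⁻¹ - (1+s+(k:ℝ))⁻¹ = s / ((1+(k:ℝ)) * (1+s+(k:ℝ))) := by
        rw [inv_sub_inv (ne_of_gt h1) (ne_of_gt h2), div_eq_div_iff (by positivity) (by positivity)]
        ring
      have e2 : s * (((k:ℝ)+1)⁻¹ * ((k:ℝ)+1)⁻¹) = s / (((k:ℝ)+1) * ((k:ℝ)+1)) := by
        rw [div_eq_mul_inv, mul_inv]
      rw [e, e2]
      apply div_le_div_of_nonneg_left hs (by positivity)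
      nlinarith
    calc ∑ k ∈ Finset.range (n+1), ((1+(k:ℝ))⁻¹ - (1+s+(k:ℝ))⁻¹)
        ≤ ∑ k ∈ Finset.range (n+1), s * (((k:ℝ)+1)⁻¹ * ((k:ℝ)+1)⁻¹) :=
          Finset.sum_le_sum hterm
      _ = s * ∑ k ∈ Finset.range (n+1), (((k:ℝ)+1)⁻¹ * ((k:ℝ)+1)⁻¹) := by
          rw [Finset.mul_sum]
      _ ≤ s * 2 := mul_le_mul_of_nonneg_left (sum_inv_sq_le n) hs
      _ = 2*s := by ring

lemma psi_lipschitz {x y : ℝ} (hx : 1 ≤ x) (hy : 1 ≤ y) :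
    |psi x - psi y| ≤ 2 * |x - y| := by
  have key : ∀ a b : ℝ, 1 ≤ a → 1 ≤ b → psi a - psi b ≤ 2 * |a - b| := by
    intro a b ha hb
    apply psi_sub_psi_le (by linarith) (by linarith)
    intro n
    have hterm : ∀ k ∈ Finset.range (n+1),
        (b+(k:ℝ))⁻¹ - (a+(k:ℝ))⁻¹ ≤ |a-b| * (((k:ℝ)+1)⁻¹ * ((k:ℝ)+1)⁻¹) := by
      intro k _
      have h1 : (0:ℝ) < a + (k:ℝ) := by positivity
      have h2 : (0:ℝ) < b + (k:ℝ) := by positivity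
      have e : (b+(k:ℝ))⁻¹ - (a+(k:ℝ))⁻¹ = (a-b) / ((a+(k:ℝ)) * (b+(k:ℝ))) := by
        rw [inv_sub_inv (ne_of_gt h2) (ne_of_gt h1), div_eq_div_iff (by positivity) (by positivity)]
        ring
      have e2 : |a-b| * (((k:ℝ)+1)⁻¹ * ((k:ℝ)+1)⁻¹)
          = |a-b| / (((k:ℝ)+1) * ((k:ℝ)+1)) := by
        rw [div_eq_mul_inv, mul_inv]
      rw [e, e2]
      apply div_le_div₀ (abs_nonneg _) (le_abs_self _) (by positivity)
      nlinarith
    calc ∑ k ∈ Finset.range (n+1), ((b+(k:ℝ))⁻¹ - (a+(k:ℝ))⁻¹)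
        ≤ ∑ k ∈ Finset.range (n+1), |a-b| * (((k:ℝ)+1)⁻¹ * ((k:ℝ)+1)⁻¹) :=
          Finset.sum_le_sum hterm
      _ = |a-b| * ∑ k ∈ Finset.range (n+1), (((k:ℝ)+1)⁻¹ * ((k:ℝ)+1)⁻¹) := by
          rw [Finset.mul_sum]
      _ ≤ |a-b| * 2 := mul_le_mul_of_nonneg_left (sum_inv_sq_le n) (abs_nonneg _)
      _ = 2 * |a-b| := by ring
  rw [abs_sub_le_iff]
  refine ⟨key x y hx hy, ?_⟩
  rw [abs_sub_comm]
  exact key y x hy hx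

/-- The auxiliary function `G u = log(u+1) - log u - 1/(u+1)`; strictly decreasing on `(0,∞)`. -/
noncomputable def Gaux (u : ℝ) : ℝ := Real.log (u+1) - Real.log u - (u+1)⁻¹

lemma Gaux_strictAnti : StrictAntiOn Gaux (Set.Ioi (0:ℝ)) := by
  have hderiv : ∀ u ∈ interior (Set.Ioi (0:ℝ)), deriv Gaux u < 0 := by
    intro u hu
    rw [interior_Ioi] at hu
    have hu' : (0:ℝ) < u := hu
    have h1 : HasDerivAt (fun v : ℝ => Real.log (v+1)) (u+1)⁻¹ u := by
      have := (Real.hasDerivAt_log (by positivity : u+1 ≠ 0)).comp u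
        ((hasDerivAt_id u).add_const (1:ℝ))
      simpa [Function.comp_def] using this
    have h2 : HasDerivAt Real.log u⁻¹ u := Real.hasDerivAt_log (ne_of_gt hu')
    have h3 : HasDerivAt (fun v : ℝ => (v+1)⁻¹) (-1/(u+1)^2) u := by
      have := ((hasDerivAt_id u).add_const (1:ℝ)).inv (by positivity)
      simp at this; exact this
    have hG : HasDerivAt Gaux ((u+1)⁻¹ - u⁻¹ - (-1/(u+1)^2)) u :=
      (h1.sub h2).sub h3
    rw [hG.deriv]
    have hpos1 : (0:ℝ) < u + 1 := by linarith
    have e1 : (u+1)⁻¹ - u⁻¹ - (-1/(u+1)^2) = -(1 / (u * (u+1)^2)) := by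
      field_simp
      ring
    rw [e1]
    have : (0:ℝ) < 1 / (u * (u+1)^2) := by positivity
    linarith
  apply strictAntiOn_of_deriv_neg (convex_Ioi 0) ?_ hderiv
  intro u hu
  have hu' : (0:ℝ) < u := hu
  apply ContinuousAt.continuousWithinAt
  have c1 : ContinuousAt (fun v : ℝ => Real.log (v+1)) u :=
    (Real.continuousAt_log (by positivity)).comp (by fun_prop)
  have c2 : ContinuousAt Real.log u := Real.continuousAt_log (ne_of_gt hu')
  have c3 : ContinuousAt (fun v : ℝ => (v+1)⁻¹) u := by
    apply ContinuousAt.inv₀ (by fun_prop) (by positivity)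
  exact (c1.sub c2).sub c3
noncomputable def rho (s : ℝ) : ℝ := psi (1+s) - Real.log s

lemma rho_nonneg {s : ℝ} (hs : 0 < s) : 0 ≤ rho s := by
  have h1 := log_sub_inv_le_psi (x := 1+s) (by linarith)
  have h2 := le_log_diff (a := s) hs
  unfold rho
  have e1 : s + 1 = 1 + s := by ring
  rw [e1] at h2
  linarith

lemma rho_le_inv {s : ℝ} (hs : 0 < s) : rho s ≤ s⁻¹ := by
  have h1 := psi_le_log (x := 1+s) (by linarith)
  have h2 := log_diff_le (a := s) hs
  unfold rho
  have e1 : s + 1 = 1 + s := by ring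
  rw [e1] at h2
  linarith

lemma rho_strictAnti {a b : ℝ} (ha : 0 < a) (hab : a < b) : rho b < rho a := by
  have hb : 0 < b := lt_trans ha hab
  have hgap : 0 < Gaux a - Gaux b := by
    have := Gaux_strictAnti (Set.mem_Ioi.mpr ha) (Set.mem_Ioi.mpr hb) hab
    linarith
  have hmain : psi (1+b) - psi (1+a) ≤ (Real.log b - Real.log a) - (Gaux a - Gaux b) := by
    apply psi_sub_psi_le (by linarith) (by linarith)
    intro n
    have key : ∀ k ∈ Finset.range (n+1), (1+a+(k:ℝ))⁻¹ - (1+b+(k:ℝ))⁻¹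
        = ((Real.log (a+(k:ℝ)+1) - Real.log (a+(k:ℝ)))
            - (Real.log (b+(k:ℝ)+1) - Real.log (b+(k:ℝ))))
          - (Gaux (a+(k:ℝ)) - Gaux (b+(k:ℝ))) := by
      intro k _
      unfold Gaux
      ring_nf
    rw [Finset.sum_congr rfl key, Finset.sum_sub_distrib]
    have htelA : ∑ k ∈ Finset.range (n+1),
        ((Real.log (a+(k:ℝ)+1) - Real.log (a+(k:ℝ)))
          - (Real.log (b+(k:ℝ)+1) - Real.log (b+(k:ℝ))))
        = (Real.log (a+(n:ℝ)+1) - Real.log a) - (Real.log (b+(n:ℝ)+1) - Real.log b) := by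
      rw [Finset.sum_sub_distrib]
      congr 1
      · have h := Finset.sum_range_sub (fun i : ℕ => Real.log (a+(i:ℝ))) (n+1)
        push_cast at h
        simp only [add_zero] at h
        rw [show Real.log (a+(n:ℝ)+1) = Real.log (a+((n:ℝ)+1)) by ring_nf, ← h]
        apply Finset.sum_congr rfl
        intro k _
        ring_nf
      · have h := Finset.sum_range_sub (fun i : ℕ => Real.log (b+(i:ℝ))) (n+1)
        push_cast at h
        simp only [add_zero] at h
        rw [show Real.log (b+(n:ℝ)+1) = Real.log (b+((n:ℝ)+1)) by ring_nf, ← h]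
        apply Finset.sum_congr rfl
        intro k _
        ring_nf
    rw [htelA]
    have hG : (Gaux a - Gaux b)
        ≤ ∑ k ∈ Finset.range (n+1), (Gaux (a+(k:ℝ)) - Gaux (b+(k:ℝ))) := by
      have h0 : (Gaux (a+((0:ℕ):ℝ)) - Gaux (b+((0:ℕ):ℝ))) = Gaux a - Gaux b := by
        norm_num
      rw [← h0]
      apply Finset.single_le_sum (f := fun k : ℕ => Gaux (a+(k:ℝ)) - Gaux (b+(k:ℝ)))
        ?_ (Finset.mem_range.mpr (Nat.succ_pos n))
      intro k _
      have hka : (0:ℝ) < a + (k:ℝ) := by positivity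
      have hkb : (0:ℝ) < b + (k:ℝ) := by positivity
      have := Gaux_strictAnti (Set.mem_Ioi.mpr hka) (Set.mem_Ioi.mpr hkb)
        (by linarith : a + (k:ℝ) < b + (k:ℝ))
      show (0:ℝ) ≤ Gaux (a+(k:ℝ)) - Gaux (b+(k:ℝ))
      linarith
    have hlogs : Real.log (a+(n:ℝ)+1) ≤ Real.log (b+(n:ℝ)+1) :=
      Real.log_le_log (by positivity) (by linarith)
    linarith
  unfold rho
  linarith
section PhiSection

variable {m n : ℕ} (lam : Fin m → Fin n → ℝ) (α : Fin m → ℝ) (β : Fin n → ℝ)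

/-- The weighted combination appearing in the log-derivative. -/
noncomputable def Phi (F : ℝ → ℝ) : ℝ :=
  (∑ i, α i * F (α i)) + (∑ j, β j * F (β j)) - 2 * ∑ i, ∑ j, lam i j * F (lam i j)

variable {lam} {α} {β}

lemma Phi_sub (F G : ℝ → ℝ) :
    Phi lam α β (fun x => F x - G x) = Phi lam α β F - Phi lam α β G := by
  unfold Phi
  simp only [mul_sub, Finset.sum_sub_distrib]
  ring

lemma Phi_ext {F G : ℝ → ℝ} (hlam : ∀ i j, 0 < lam i j)
    (hα : ∀ i, 0 < α i) (hβ : ∀ j, 0 < β j)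
    (h : ∀ x : ℝ, 0 < x → F x = G x) : Phi lam α β F = Phi lam α β G := by
  unfold Phi
  congr 1
  · congr 1
    · exact Finset.sum_congr rfl fun i _ => by rw [h _ (hα i)]
    · exact Finset.sum_congr rfl fun j _ => by rw [h _ (hβ j)]
  · congr 1
    exact Finset.sum_congr rfl fun i _ =>
      Finset.sum_congr rfl fun j _ => by rw [h _ (hlam i j)]

lemma Phi_const (c : ℝ)
    (hSα : ∑ i, α i = ∑ i, ∑ j, lam i j)
    (hSβ : ∑ j, β j = ∑ i, ∑ j, lam i j) :
    Phi lam α β (fun _ => c) = 0 := by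
  unfold Phi
  rw [← Finset.sum_mul, ← Finset.sum_mul, hSα, hSβ]
  have : ∑ i, ∑ j, lam i j * c = (∑ i, ∑ j, lam i j) * c := by
    rw [Finset.sum_mul]
    exact Finset.sum_congr rfl fun i _ => by rw [Finset.sum_mul]
  rw [this]
  ring

lemma Phi_finsum {s : Finset ℕ} (F : ℕ → ℝ → ℝ) :
    Phi lam α β (fun x => ∑ k ∈ s, F k x) = ∑ k ∈ s, Phi lam α β (F k) := by
  have hA : (∑ i, α i * ∑ k ∈ s, F k (α i)) = ∑ k ∈ s, ∑ i, α i * F k (α i) := by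
    simp_rw [Finset.mul_sum]
    exact Finset.sum_comm
  have hB : (∑ j, β j * ∑ k ∈ s, F k (β j)) = ∑ k ∈ s, ∑ j, β j * F k (β j) := by
    simp_rw [Finset.mul_sum]
    exact Finset.sum_comm
  have hC : (∑ i, ∑ j, lam i j * ∑ k ∈ s, F k (lam i j))
      = ∑ k ∈ s, ∑ i, ∑ j, lam i j * F k (lam i j) := by
    simp_rw [Finset.mul_sum]
    rw [show (∑ i, ∑ j, ∑ k ∈ s, lam i j * F k (lam i j))
        = ∑ i, ∑ k ∈ s, ∑ j, lam i j * F k (lam i j) from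
      Finset.sum_congr rfl fun i _ => Finset.sum_comm]
    exact Finset.sum_comm
  unfold Phi
  rw [hA, hB, hC, ← Finset.sum_add_distrib, Finset.mul_sum, ← Finset.sum_sub_distrib]

variable (hm : 0 < m) (hn : 0 < n) (hlam : ∀ i j, 0 < lam i j)
  (hα : ∀ i, α i = ∑ j, lam i j) (hβ : ∀ j, β j = ∑ i, lam i j)

include hlam hα in
lemma row_le {F : ℝ → ℝ} (hF : ∀ x y : ℝ, 0 < x → x ≤ y → F y ≤ F x) (i : Fin m) :
    α i * F (α i) ≤ ∑ j, lam i j * F (lam i j) := by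
  have hαi : ∀ j, lam i j ≤ α i := by
    intro j
    rw [hα i]
    exact Finset.single_le_sum (fun j' _ => (hlam i j').le) (Finset.mem_univ j)
  have h1 : α i * F (α i) = ∑ j, lam i j * F (α i) := by
    rw [← Finset.sum_mul, ← hα i]
  rw [h1]
  apply Finset.sum_le_sum
  intro j _
  exact mul_le_mul_of_nonneg_left (hF _ _ (hlam i j) (hαi j)) (hlam i j).le

include hlam hα hn in
lemma row_lt {F : ℝ → ℝ} (hF : ∀ x y : ℝ, 0 < x → x ≤ y → F y ≤ F x)
    (hFs : ∀ x y : ℝ, 0 < x → x < y → F y < F x) (hn2 : 2 ≤ n) (i : Fin m) :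
    α i * F (α i) < ∑ j, lam i j * F (lam i j) := by
  have hαi : ∀ j, lam i j < α i := by
    intro j
    rw [hα i]
    obtain ⟨j', hj'⟩ : ∃ j' : Fin n, j' ≠ j := by
      have hcard : 1 < Fintype.card (Fin n) := by simpa using (show 1 < n by omega)
      exact Fintype.exists_ne_of_one_lt_card hcard j
    calc lam i j < lam i j + lam i j' := by linarith [hlam i j']
      _ ≤ ∑ j'', lam i j'' := by
          rw [← Finset.sum_erase_add Finset.univ _ (Finset.mem_univ j)]
          have : lam i j' ≤ ∑ j'' ∈ Finset.univ.erase j, lam i j'' :=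
            Finset.single_le_sum (fun j'' _ => (hlam i j'').le)
              (Finset.mem_erase.mpr ⟨hj', Finset.mem_univ j'⟩)
          linarith
  have h1 : α i * F (α i) = ∑ j, lam i j * F (α i) := by
    rw [← Finset.sum_mul, ← hα i]
  haveI : Nonempty (Fin n) := Fin.pos_iff_nonempty.mp hn
  rw [h1]
  apply Finset.sum_lt_sum_of_nonempty
  · exact Finset.univ_nonempty
  · intro j _
    exact mul_lt_mul_of_pos_left (hFs _ _ (hlam i j) (hαi j)) (hlam i j)

include hlam hβ in
lemma col_le {F : ℝ → ℝ} (hF : ∀ x y : ℝ, 0 < x → x ≤ y → F y ≤ F x) (j : Fin n) :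
    β j * F (β j) ≤ ∑ i, lam i j * F (lam i j) := by
  have hβj : ∀ i, lam i j ≤ β j := by
    intro i
    rw [hβ j]
    exact Finset.single_le_sum (fun i' _ => (hlam i' j).le) (Finset.mem_univ i)
  have h1 : β j * F (β j) = ∑ i, lam i j * F (β j) := by
    rw [← Finset.sum_mul, ← hβ j]
  rw [h1]
  apply Finset.sum_le_sum
  intro i _
  exact mul_le_mul_of_nonneg_left (hF _ _ (hlam i j) (hβj i)) (hlam i j).le

include hlam hβ hm in
lemma col_lt {F : ℝ → ℝ} (hF : ∀ x y : ℝ, 0 < x → x ≤ y → F y ≤ F x)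
    (hFs : ∀ x y : ℝ, 0 < x → x < y → F y < F x) (hm2 : 2 ≤ m) (j : Fin n) :
    β j * F (β j) < ∑ i, lam i j * F (lam i j) := by
  have hβj : ∀ i, lam i j < β j := by
    intro i
    rw [hβ j]
    obtain ⟨i', hi'⟩ : ∃ i' : Fin m, i' ≠ i := by
      have hcard : 1 < Fintype.card (Fin m) := by simpa using (show 1 < m by omega)
      exact Fintype.exists_ne_of_one_lt_card hcard i
    calc lam i j < lam i j + lam i' j := by linarith [hlam i' j]
      _ ≤ ∑ i'', lam i'' j := by
          rw [← Finset.sum_erase_add Finset.univ _ (Finset.mem_univ i)]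
          have : lam i' j ≤ ∑ i'' ∈ Finset.univ.erase i, lam i'' j :=
            Finset.single_le_sum (fun i'' _ => (hlam i'' j).le)
              (Finset.mem_erase.mpr ⟨hi', Finset.mem_univ i'⟩)
          linarith
  have h1 : β j * F (β j) = ∑ i, lam i j * F (β j) := by
    rw [← Finset.sum_mul, ← hβ j]
  haveI : Nonempty (Fin m) := Fin.pos_iff_nonempty.mp hm
  rw [h1]
  apply Finset.sum_lt_sum_of_nonempty
  · exact Finset.univ_nonempty
  · intro i _
    exact mul_lt_mul_of_pos_left (hFs _ _ (hlam i j) (hβj i)) (hlam i j)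

include hlam hα hβ in
lemma Phi_nonpos {F : ℝ → ℝ} (hF : ∀ x y : ℝ, 0 < x → x ≤ y → F y ≤ F x) :
    Phi lam α β F ≤ 0 := by
  have h1 : ∑ i, α i * F (α i) ≤ ∑ i, ∑ j, lam i j * F (lam i j) :=
    Finset.sum_le_sum fun i _ => row_le hlam hα hF i
  have h2 : ∑ j, β j * F (β j) ≤ ∑ i, ∑ j, lam i j * F (lam i j) := by
    rw [Finset.sum_comm]
    exact Finset.sum_le_sum fun j _ => col_le hlam hβ hF j
  unfold Phi
  linarith

include hm hn hlam hα hβ in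
lemma Phi_neg {F : ℝ → ℝ} (hmn : 2 ≤ m ∨ 2 ≤ n)
    (hF : ∀ x y : ℝ, 0 < x → x ≤ y → F y ≤ F x)
    (hFs : ∀ x y : ℝ, 0 < x → x < y → F y < F x) :
    Phi lam α β F < 0 := by
  have h1 : ∑ i, α i * F (α i) ≤ ∑ i, ∑ j, lam i j * F (lam i j) :=
    Finset.sum_le_sum fun i _ => row_le hlam hα hF i
  have h2 : ∑ j, β j * F (β j) ≤ ∑ i, ∑ j, lam i j * F (lam i j) := by
    rw [Finset.sum_comm]
    exact Finset.sum_le_sum fun j _ => col_le hlam hβ hF j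
  haveI : Nonempty (Fin m) := Fin.pos_iff_nonempty.mp hm
  haveI : Nonempty (Fin n) := Fin.pos_iff_nonempty.mp hn
  have key : (∑ i, α i * F (α i) < ∑ i, ∑ j, lam i j * F (lam i j)) ∨
      (∑ j, β j * F (β j) < ∑ i, ∑ j, lam i j * F (lam i j)) := by
    rcases hmn with hm2 | hn2
    · right
      rw [Finset.sum_comm]
      exact Finset.sum_lt_sum_of_nonempty Finset.univ_nonempty
        (fun j _ => col_lt hm hlam hβ hF hFs hm2 j)
    · left
      exact Finset.sum_lt_sum_of_nonempty Finset.univ_nonempty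
        (fun i _ => row_lt hn hlam hα hF hFs hn2 i)
  unfold Phi
  rcases key with h | h
  · linarith
  · linarith

include hlam hα hβ in
lemma Phi_upper {F : ℝ → ℝ} {c : ℝ} (hc : 0 ≤ c)
    (hα0 : ∀ i, 0 < α i) (hβ0 : ∀ j, 0 < β j)
    (hF0 : ∀ x : ℝ, 0 < x → 0 ≤ F x) (hFb : ∀ x : ℝ, 0 < x → F x ≤ c * x) :
    Phi lam α β F ≤ c * ((∑ i, α i * α i) + ∑ j, β j * β j) := by
  have h1 : ∑ i, α i * F (α i) ≤ c * ∑ i, α i * α i := by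
    rw [Finset.mul_sum]
    apply Finset.sum_le_sum
    intro i _
    calc α i * F (α i) ≤ α i * (c * α i) :=
          mul_le_mul_of_nonneg_left (hFb _ (hα0 i)) (hα0 i).le
      _ = c * (α i * α i) := by ring
  have h2 : ∑ j, β j * F (β j) ≤ c * ∑ j, β j * β j := by
    rw [Finset.mul_sum]
    apply Finset.sum_le_sum
    intro j _
    calc β j * F (β j) ≤ β j * (c * β j) :=
          mul_le_mul_of_nonneg_left (hFb _ (hβ0 j)) (hβ0 j).le
      _ = c * (β j * β j) := by ring
  have h3 : (0:ℝ) ≤ ∑ i, ∑ j, lam i j * F (lam i j) :=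
    Finset.sum_nonneg fun i _ => Finset.sum_nonneg fun j _ =>
      mul_nonneg (hlam i j).le (hF0 _ (hlam i j))
  unfold Phi
  linarith

include hlam hα hβ in
lemma Phi_lower {F : ℝ → ℝ} {c : ℝ}
    (hα0 : ∀ i, 0 < α i) (hβ0 : ∀ j, 0 < β j)
    (hF0 : ∀ x : ℝ, 0 < x → 0 ≤ F x) (hFb : ∀ x : ℝ, 0 < x → F x ≤ c * x⁻¹) :
    -(2 * (m * n) * c) ≤ Phi lam α β F := by
  have h1 : (0:ℝ) ≤ ∑ i, α i * F (α i) :=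
    Finset.sum_nonneg fun i _ => mul_nonneg (hα0 i).le (hF0 _ (hα0 i))
  have h2 : (0:ℝ) ≤ ∑ j, β j * F (β j) :=
    Finset.sum_nonneg fun j _ => mul_nonneg (hβ0 j).le (hF0 _ (hβ0 j))
  have h3 : ∑ i, ∑ j, lam i j * F (lam i j) ≤ (m * n) * c := by
    have : ∀ i : Fin m, ∑ j, lam i j * F (lam i j) ≤ (n : ℝ) * c := by
      intro i
      calc ∑ j, lam i j * F (lam i j) ≤ ∑ j : Fin n, c := by
            apply Finset.sum_le_sum
            intro j _
            calc lam i j * F (lam i j) ≤ lam i j * (c * (lam i j)⁻¹) :=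
                  mul_le_mul_of_nonneg_left (hFb _ (hlam i j)) (hlam i j).le
              _ = c := by
                  field_simp
                  rw [mul_comm (lam i j) c, mul_div_assoc, div_self (ne_of_gt (hlam i j)), mul_one]
        _ = (n : ℝ) * c := by
            rw [Finset.sum_const, Finset.card_univ, Fintype.card_fin, nsmul_eq_mul]
    calc ∑ i, ∑ j, lam i j * F (lam i j) ≤ ∑ i : Fin m, (n : ℝ) * c :=
          Finset.sum_le_sum fun i _ => this i
      _ = (m : ℝ) * ((n : ℝ) * c) := by
          rw [Finset.sum_const, Finset.card_univ, Fintype.card_fin, nsmul_eq_mul]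
      _ = (m * n) * c := by push_cast; ring
  unfold Phi
  linarith

end PhiSection
set_option maxHeartbeats 1000000 in
theorem image_log_deriv_ratio_gamma_rho_two
    (m n : ℕ) (hm : 0 < m) (hn : 0 < n) (hmn : 2 ≤ m ∨ 2 ≤ n)
    (lam : Fin m → Fin n → ℝ) (hlam : ∀ i j, 0 < lam i j)
    (α : Fin m → ℝ) (hα : ∀ i, α i = ∑ j : Fin n, lam i j)
    (β : Fin n → ℝ) (hβ : ∀ j, β j = ∑ i : Fin m, lam i j)
    (f : ℝ → ℝ)
    (hf : ∀ t, f t =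
      ((∏ i : Fin m, Real.Gamma (1 + α i * t)) * ∏ j : Fin n, Real.Gamma (1 + β j * t)) /
        (∏ i : Fin m, ∏ j : Fin n, Real.Gamma (1 + lam i j * t)) ^ 2) :
    deriv (fun s => Real.log (f s)) '' Set.Ioi 0 =
      Set.Ioo 0 (Real.log
        (((∏ i : Fin m, α i ^ α i) * ∏ j : Fin n, β j ^ β j) /
          (∏ i : Fin m, ∏ j : Fin n, lam i j ^ lam i j) ^ 2)) := by
  haveI : Nonempty (Fin m) := Fin.pos_iff_nonempty.mp hm
  haveI : Nonempty (Fin n) := Fin.pos_iff_nonempty.mp hn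
  have hα0 : ∀ i, 0 < α i := fun i => by
    rw [hα i]; exact Finset.sum_pos (fun j _ => hlam i j) Finset.univ_nonempty
  have hβ0 : ∀ j, 0 < β j := fun j => by
    rw [hβ j]; exact Finset.sum_pos (fun i _ => hlam i j) Finset.univ_nonempty
  have hSα : ∑ i, α i = ∑ i, ∑ j, lam i j := Finset.sum_congr rfl fun i _ => hα i
  have hSβ : ∑ j, β j = ∑ i, ∑ j, lam i j := by
    rw [Finset.sum_comm]; exact Finset.sum_congr rfl fun j _ => hβ j
  set W : ℝ → ℝ := fun t => Phi lam α β (fun x => psi (1+x*t)) with hWdef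
  -- the limit value L
  set L : ℝ := Phi lam α β Real.log with hLdef
  -- ## Identification of the RHS endpoint
  have hLog : Real.log (((∏ i : Fin m, α i ^ α i) * ∏ j : Fin n, β j ^ β j) /
      (∏ i : Fin m, ∏ j : Fin n, lam i j ^ lam i j) ^ 2) = L := by
    have hA : (0:ℝ) < ∏ i : Fin m, α i ^ α i :=
      Finset.prod_pos fun i _ => Real.rpow_pos_of_pos (hα0 i) _
    have hB : (0:ℝ) < ∏ j : Fin n, β j ^ β j :=
      Finset.prod_pos fun j _ => Real.rpow_pos_of_pos (hβ0 j) _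
    have hC : (0:ℝ) < ∏ i : Fin m, ∏ j : Fin n, lam i j ^ lam i j :=
      Finset.prod_pos fun i _ => Finset.prod_pos fun j _ =>
        Real.rpow_pos_of_pos (hlam i j) _
    rw [Real.log_div (mul_ne_zero (ne_of_gt hA) (ne_of_gt hB)) (pow_ne_zero 2 (ne_of_gt hC)),
      Real.log_mul (ne_of_gt hA) (ne_of_gt hB), Real.log_pow,
      Real.log_prod (fun i _ => (Real.rpow_pos_of_pos (hα0 i) _).ne'),
      Real.log_prod (fun j _ => (Real.rpow_pos_of_pos (hβ0 j) _).ne'),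
      Real.log_prod (fun i _ => (Finset.prod_pos (fun j _ =>
        Real.rpow_pos_of_pos (hlam i j) _)).ne')]
    have e1 : ∀ i ∈ Finset.univ, Real.log (α i ^ α i) = α i * Real.log (α i) :=
      fun i _ => Real.log_rpow (hα0 i) _
    have e2 : ∀ j ∈ Finset.univ, Real.log (β j ^ β j) = β j * Real.log (β j) :=
      fun j _ => Real.log_rpow (hβ0 j) _
    have e3 : ∀ i ∈ Finset.univ, Real.log (∏ j, lam i j ^ lam i j)
        = ∑ j, lam i j * Real.log (lam i j) := by
      intro i _
      rw [Real.log_prod (fun j _ => (Real.rpow_pos_of_pos (hlam i j) _).ne')]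
      exact Finset.sum_congr rfl fun j _ => Real.log_rpow (hlam i j) _
    rw [Finset.sum_congr rfl e1, Finset.sum_congr rfl e2, Finset.sum_congr rfl e3]
    simp only [L, Phi]
    push_cast
    ring
  -- ## The derivative of log ∘ f is W
  have hfW : ∀ t : ℝ, 0 < t → HasDerivAt (fun s => Real.log (f s)) (W t) t := by
    intro t ht
    have hfe : (fun s => Real.log (f s)) = (fun s => Real.log
        (((∏ i : Fin m, Real.Gamma (1 + α i * s)) * ∏ j : Fin n, Real.Gamma (1 + β j * s)) /
          (∏ i : Fin m, ∏ j : Fin n, Real.Gamma (1 + lam i j * s)) ^ 2)) :=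
      funext fun s => by rw [hf s]
    rw [hfe]
    have hterm : ∀ x : ℝ, 0 < x →
        HasDerivAt (fun s => Real.log (Real.Gamma (1+x*s))) (x * psi (1+x*t)) t := by
      intro x hx
      have h1 : HasDerivAt (fun s : ℝ => 1+x*s) x t := by
        simpa using ((hasDerivAt_id t).const_mul x).const_add 1
      have h0 : (0:ℝ) < 1+x*t := by nlinarith
      have h2 := (psi_hasDerivAt h0).comp t h1
      simpa [mul_comm, Function.comp_def] using h2
    have hA : HasDerivAt (fun s => ∑ i : Fin m, Real.log (Real.Gamma (1+α i*s)))
        (∑ i, α i * psi (1+α i*t)) t := HasDerivAt.fun_sum (fun i _ => hterm _ (hα0 i))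
    have hB : HasDerivAt (fun s => ∑ j : Fin n, Real.log (Real.Gamma (1+β j*s)))
        (∑ j, β j * psi (1+β j*t)) t := HasDerivAt.fun_sum (fun j _ => hterm _ (hβ0 j))
    have hC : HasDerivAt (fun s => ∑ i : Fin m, ∑ j : Fin n, Real.log (Real.Gamma (1+lam i j*s)))
        (∑ i, ∑ j, lam i j * psi (1+lam i j*t)) t :=
      HasDerivAt.fun_sum (fun i _ => HasDerivAt.fun_sum (fun j _ => hterm _ (hlam i j)))
    have hgd : HasDerivAt (fun s => (∑ i : Fin m, Real.log (Real.Gamma (1+α i*s)))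
        + (∑ j : Fin n, Real.log (Real.Gamma (1+β j*s)))
        - 2 * ∑ i : Fin m, ∑ j : Fin n, Real.log (Real.Gamma (1+lam i j*s))) (W t) t := by
      have := (hA.add hB).sub (hC.const_mul 2)
      exact this.congr_deriv (by simp only [hWdef, Phi])
    apply hgd.congr_of_eventuallyEq
    apply Filter.eventuallyEq_of_mem (Ioi_mem_nhds ht)
    intro s hs
    have hs' : (0:ℝ) < s := hs
    have hΓ : ∀ x : ℝ, 0 < x → (0:ℝ) < Real.Gamma (1+x*s) := by
      intro x hx
      apply Real.Gamma_pos_of_pos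
      nlinarith
    have hPA : (0:ℝ) < ∏ i : Fin m, Real.Gamma (1 + α i * s) :=
      Finset.prod_pos fun i _ => hΓ _ (hα0 i)
    have hPB : (0:ℝ) < ∏ j : Fin n, Real.Gamma (1 + β j * s) :=
      Finset.prod_pos fun j _ => hΓ _ (hβ0 j)
    have hPC : (0:ℝ) < ∏ i : Fin m, ∏ j : Fin n, Real.Gamma (1 + lam i j * s) :=
      Finset.prod_pos fun i _ => Finset.prod_pos fun j _ => hΓ _ (hlam i j)
    show Real.log _ = _
    rw [Real.log_div (by positivity) (by positivity),
      Real.log_mul (ne_of_gt hPA) (ne_of_gt hPB), Real.log_pow,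
      Real.log_prod (fun i _ => ne_of_gt (hΓ _ (hα0 i))),
      Real.log_prod (fun j _ => ne_of_gt (hΓ _ (hβ0 j))),
      Real.log_prod (fun i _ => ne_of_gt (Finset.prod_pos
        fun j _ => hΓ _ (hlam i j)))]
    have e3 : ∀ i ∈ Finset.univ, Real.log (∏ j, Real.Gamma (1 + lam i j * s))
        = ∑ j, Real.log (Real.Gamma (1 + lam i j * s)) := fun i _ =>
      Real.log_prod (fun j _ => ne_of_gt (hΓ _ (hlam i j)))
    rw [Finset.sum_congr rfl e3]
    push_cast
    ring
  have hderiv_eq : ∀ t : ℝ, 0 < t → deriv (fun s => Real.log (f s)) t = W t :=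
    fun t ht => (hfW t ht).deriv
  -- ## Lower bound: 0 < W t
  have hWpos : ∀ t : ℝ, 0 < t → 0 < W t := by
    intro t ht
    set w : ℕ → ℝ := fun k => -Phi lam α β (fun x => (1+x*t+(k:ℝ))⁻¹) with hwdef
    have hPhiN : ∀ N : ℕ, Phi lam α β (fun x => dg N (1+x*t))
        = ∑ k ∈ Finset.range (N+1), w k := by
      intro N
      have e : (fun x : ℝ => dg N (1+x*t)) = fun x =>
          (fun _ : ℝ => Real.log N) x - (fun x => ∑ k ∈ Finset.range (N+1), (1+x*t+(k:ℝ))⁻¹) x := by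
        funext x
        simp only [dg]
      rw [e, Phi_sub, Phi_const _ hSα hSβ,
        Phi_finsum (F := fun (k:ℕ) (x:ℝ) => (1+x*t+(k:ℝ))⁻¹)]
      simp only [hwdef, Finset.sum_neg_distrib]
      ring
    have hw_nonneg : ∀ k : ℕ, 0 ≤ w k := by
      intro k
      have := Phi_nonpos hlam hα hβ (F := fun x => (1+x*t+(k:ℝ))⁻¹) ?_
      · simp only [hwdef]; linarith
      · intro x y hx hxy
        apply inv_anti₀ (by positivity)
        nlinarith
    have hw0 : 0 < w 0 := by
      have := Phi_neg hm hn hlam hα hβ (F := fun x => (1+x*t+((0:ℕ):ℝ))⁻¹) hmn ?_ ?_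
      · simp only [hwdef]; linarith
      · intro x y hx hxy
        apply inv_anti₀ (by positivity)
        nlinarith
      · intro x y hx hxy
        apply inv_strictAnti₀ (by positivity)
        nlinarith
    have hDtend : Filter.Tendsto (fun N => Phi lam α β (fun x => dg N (1+x*t)))
        Filter.atTop (𝓝 (W t)) := by
      have hx : ∀ x : ℝ, 0 < x → (0:ℝ) < 1+x*t := fun x hx => by nlinarith
      simp only [Phi, hWdef]
      apply Filter.Tendsto.sub
      · apply Filter.Tendsto.add
        · exact tendsto_finset_sum _ (fun i _ => (dg_tendsto (hx _ (hα0 i))).const_mul _)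
        · exact tendsto_finset_sum _ (fun j _ => (dg_tendsto (hx _ (hβ0 j))).const_mul _)
      · apply Filter.Tendsto.const_mul
        exact tendsto_finset_sum _ (fun i _ => tendsto_finset_sum _
          (fun j _ => (dg_tendsto (hx _ (hlam i j))).const_mul _))
    have hge : w 0 ≤ W t := by
      apply ge_of_tendsto hDtend
      filter_upwards with N
      rw [hPhiN N]
      exact Finset.single_le_sum (fun k _ => hw_nonneg k)
        (Finset.mem_range.mpr (Nat.succ_pos N))
    linarith
  -- ## Upper bound: W t < L
  have hWL : ∀ t : ℝ, 0 < t → W t = L + Phi lam α β (fun x => rho (x*t)) := by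
    intro t ht
    have h1 : Phi lam α β (fun x => psi (1+x*t) - Real.log x)
        = W t - L := by
      rw [Phi_sub]
    have h2 : Phi lam α β (fun x => (psi (1+x*t) - Real.log x) - rho (x*t))
        = W t - L - Phi lam α β (fun x => rho (x*t)) := by
      rw [Phi_sub, h1]
    have h3 : Phi lam α β (fun x => (psi (1+x*t) - Real.log x) - rho (x*t))
        = Phi lam α β (fun _ => Real.log t) := by
      apply Phi_ext hlam hα0 hβ0
      intro x hx
      unfold rho
      rw [Real.log_mul (ne_of_gt hx) (ne_of_gt ht)]
      ring
    rw [h3, Phi_const _ hSα hSβ] at h2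
    linarith
  have hrho_anti : ∀ t : ℝ, 0 < t → ∀ x y : ℝ, 0 < x → x ≤ y →
      rho (y*t) ≤ rho (x*t) := by
    intro t ht x y hx hxy
    rcases eq_or_lt_of_le hxy with h | h
    · rw [h]
    · exact (rho_strictAnti (by positivity) (by nlinarith)).le
  have hrho_anti' : ∀ t : ℝ, 0 < t → ∀ x y : ℝ, 0 < x → x < y →
      rho (y*t) < rho (x*t) := fun t ht x y hx h =>
    rho_strictAnti (by positivity) (by nlinarith)
  have hWlt : ∀ t : ℝ, 0 < t → W t < L := by
    intro t ht
    have hneg : Phi lam α β (fun x => rho (x*t)) < 0 :=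
      Phi_neg hm hn hlam hα hβ hmn (hrho_anti t ht) (hrho_anti' t ht)
    have := hWL t ht
    linarith
  -- ## Behaviour near 0
  set C0 : ℝ := 2*((∑ i, α i * α i) + ∑ j, β j * β j) with hC0def
  have hC0 : 0 ≤ C0 := by
    have h1 : (0:ℝ) ≤ ∑ i, α i * α i :=
      Finset.sum_nonneg fun i _ => mul_nonneg (hα0 i).le (hα0 i).le
    have h2 : (0:ℝ) ≤ ∑ j, β j * β j :=
      Finset.sum_nonneg fun j _ => mul_nonneg (hβ0 j).le (hβ0 j).le
    rw [hC0def]; linarith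
  have hWnear0 : ∀ t : ℝ, 0 < t → W t ≤ C0 * t := by
    intro t ht
    have hWd : W t = Phi lam α β (fun x => psi (1+x*t) - psi 1) := by
      have : Phi lam α β (fun x => psi (1+x*t) - psi 1)
          = W t - Phi lam α β (fun _ => psi 1) := Phi_sub _ _
      rw [Phi_const _ hSα hSβ] at this
      linarith
    rw [hWd]
    have := Phi_upper hlam hα hβ (F := fun x => psi (1+x*t) - psi 1) (c := 2*t)
      (by linarith) hα0 hβ0 ?_ ?_
    · rw [hC0def]; linarith
    · intro x hx
      exact (psi_one_add_sub_psi_one (by positivity)).1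
    · intro x hx
      have := (psi_one_add_sub_psi_one (s := x*t) (by positivity)).2
      calc psi (1+x*t) - psi 1 ≤ 2*(x*t) := this
        _ = 2*t*x := by ring
  -- ## Behaviour near ∞
  have hWnearInf : ∀ t : ℝ, 0 < t → L - W t ≤ 2*(m*n)*t⁻¹ := by
    intro t ht
    have hlow := Phi_lower hlam hα hβ (F := fun x => rho (x*t)) (c := t⁻¹)
      hα0 hβ0 ?_ ?_
    · have := hWL t ht
      linarith
    · intro x hx
      exact rho_nonneg (by positivity)
    · intro x hx
      have h1 := rho_le_inv (s := x*t) (by positivity)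
      calc rho (x*t) ≤ (x*t)⁻¹ := h1
        _ = t⁻¹ * x⁻¹ := by rw [mul_inv]; ring
  -- ## Continuity of W
  have hpsiCont : ContinuousOn psi (Set.Ici 1) := by
    apply LipschitzOnWith.continuousOn (K := 2)
    apply LipschitzOnWith.of_dist_le_mul
    intro x hx y hy
    rw [Real.dist_eq, Real.dist_eq]
    have := psi_lipschitz (x := x) (y := y) hx hy
    simpa using this
  have hWcont : ContinuousOn W (Set.Ici (0:ℝ)) := by
    have hterm : ∀ x : ℝ, 0 < x → ContinuousOn (fun t => psi (1+x*t)) (Set.Ici (0:ℝ)) := by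
      intro x hx
      apply hpsiCont.comp ((continuous_const.add (continuous_const.mul continuous_id)).continuousOn)
      intro t ht
      have ht' : (0:ℝ) ≤ t := ht
      show (1:ℝ) ≤ 1 + x*t
      nlinarith
    simp only [hWdef, Phi]
    apply ContinuousOn.sub
    · apply ContinuousOn.add
      · exact continuousOn_finset_sum _ (fun i _ => continuousOn_const.mul (hterm _ (hα0 i)))
      · exact continuousOn_finset_sum _ (fun j _ => continuousOn_const.mul (hterm _ (hβ0 j)))
    · exact continuousOn_const.mul (continuousOn_finset_sum _ (fun i _ =>
        continuousOn_finset_sum _ (fun j _ => continuousOn_const.mul (hterm _ (hlam i j)))))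
  -- ## Assembly
  rw [hLog]
  ext y
  simp only [Set.mem_image, Set.mem_Ioo, Set.mem_Ioi]
  constructor
  · rintro ⟨t, ht, hty⟩
    rw [hderiv_eq t ht] at hty
    exact hty ▸ ⟨hWpos t ht, hWlt t ht⟩
  · rintro ⟨hy0, hyL⟩
    set t1 : ℝ := y / (C0+1) with ht1def
    have ht1 : 0 < t1 := by
      rw [ht1def]; positivity
    have hWt1 : W t1 ≤ y := by
      have h1 := hWnear0 t1 ht1
      have h2 : C0 * t1 < y := by
        rw [ht1def]
        have e : C0 * (y / (C0+1)) = y * (C0/(C0+1)) := by ring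
        rw [e]
        have hlt : C0/(C0+1) < 1 := by
          rw [div_lt_one (by linarith)]
          linarith
        nlinarith
      linarith
    set d : ℝ := L - y with hddef
    have hd : 0 < d := by rw [hddef]; linarith
    set t2 : ℝ := max t1 ((2*(m*n)+1)/d) with ht2def
    have ht12 : t1 ≤ t2 := le_max_left _ _
    have ht2 : 0 < t2 := lt_of_lt_of_le ht1 ht12
    have hWt2 : y < W t2 := by
      have h1 := hWnearInf t2 ht2
      have h2 : (2*(m*n)+1)/d ≤ t2 := le_max_right _ _
      have hmn0 : (0:ℝ) ≤ 2*(m*n) := by positivity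
      have h3 : 2*(m*n)*t2⁻¹ < d := by
        have hq : (0:ℝ) < (2*(m*n)+1)/d := div_pos (by positivity) hd
        have h4 : t2⁻¹ ≤ d/(2*(m*n)+1) := by
          have := inv_anti₀ hq h2
          rwa [inv_div] at this
        calc 2*(m*n)*t2⁻¹ ≤ 2*(m*n)*(d/(2*(m*n)+1)) :=
              mul_le_mul_of_nonneg_left h4 hmn0
          _ < d := by
              have e : 2*(m*n)*(d/(2*(m*n)+1)) = d * ((2*(m*n))/(2*(m*n)+1)) := by
                ring
              rw [e]
              have hlt : (2*(m*n):ℝ)/(2*(m*n)+1) < 1 := by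
                rw [div_lt_one (by positivity)]
                linarith
              nlinarith
      rw [hddef] at h3
      linarith
    have hIVT := intermediate_value_Icc ht12 (hWcont.mono ?_)
    · have hy_mem : y ∈ Set.Icc (W t1) (W t2) := ⟨hWt1, hWt2.le⟩
      obtain ⟨t, htmem, hWt⟩ := hIVT hy_mem
      refine ⟨t, lt_of_lt_of_le ht1 htmem.1, ?_⟩
      rw [hderiv_eq t (lt_of_lt_of_le ht1 htmem.1)]
      exact hWt
    · intro t htm
      exact le_trans ht1.le htm.1
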